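/- Under the gauge conditions (M^L(δG_k))ᵀ M^L(U_k) = 0 for k = 1,…,d−1, left-orthogonality of U_k and right-orthogonality of V_k, the inner product of two tangent vectors v^(α), v^(β) parametrized by cores δG_k^(α) and δG_k^(β) equals the sum over k of the Frobenius inner products ⟨δG_k^(α), δG_k^(β)⟩_F. -/

import Mathlib

open Finset


/-- Entry of a tensor given by a TT representation with rank function `r`
(boundary ranks `1`). -/
noncomputable def ttEntry {d n : ℕ} (r : Fin (d + 1) → ℕ)
    (G : ∀ k : Fin d, Fin n → Matrix (Fin (r k.castSucc)) (Fin (r k.succ)) ℝ)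
    (x : Fin d → Fin n) : ℝ :=
  ∑ α : (∀ k : Fin (d + 1), Fin (r k)),
    ∏ k : Fin d, G k (x k) (α k.castSucc) (α k.succ)

/-- Tangent vector parametrized by correction cores `δG`:
`Ξ = Σ_k U₁⋯U_{k−1} δG_k V_{k+1}⋯V_d`. -/
noncomputable def tangentVec {d n : ℕ} (r : Fin (d + 1) → ℕ)
    (U V δG : ∀ k : Fin d, Fin n → Matrix (Fin (r k.castSucc)) (Fin (r k.succ)) ℝ) :
    (Fin d → Fin n) → ℝ :=
  fun i => ∑ k : Fin d,
    ttEntry r (fun l x => if l < k then U l x else if l = k then δG l x else V l x) i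

/-- Weighted path sum along a chain of transfer kernels. -/
noncomputable def pathSumW {d : ℕ} (σ : Fin (d + 1) → Type) [∀ k, Fintype (σ k)]
    (C : ∀ k : Fin d, σ k.castSucc → σ k.succ → ℝ) (w : σ (Fin.last d) → ℝ) : ℝ :=
  ∑ α : (∀ k, σ k), (∏ k : Fin d, C k (α k.castSucc) (α k.succ)) * w (α (Fin.last d))

/-- Forward-propagated state. -/
noncomputable def Lmat {d : ℕ} (σ : Fin (d + 1) → Type) [∀ k, Fintype (σ k)]
    (C : ∀ k : Fin d, σ k.castSucc → σ k.succ → ℝ) : ∀ m : Fin (d + 1), σ m → ℝ :=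
  Fin.induction (fun _ => 1) (fun k prev q => ∑ p, prev p * C k p q)

lemma Lmat_zero {d : ℕ} (σ : Fin (d + 1) → Type) [∀ k, Fintype (σ k)]
    (C : ∀ k : Fin d, σ k.castSucc → σ k.succ → ℝ) (p : σ 0) : Lmat σ C 0 p = 1 := rfl

lemma Lmat_succ {d : ℕ} (σ : Fin (d + 1) → Type) [∀ k, Fintype (σ k)]
    (C : ∀ k : Fin d, σ k.castSucc → σ k.succ → ℝ) (k : Fin d) (q : σ k.succ) :
    Lmat σ C k.succ q = ∑ p, Lmat σ C k.castSucc p * C k p q := by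
  simp [Lmat, Fin.induction_succ]

lemma pathSumW_eq (d : ℕ) :
    ∀ (σ : Fin (d + 1) → Type) (inst : ∀ k, Fintype (σ k))
      (C : ∀ k : Fin d, σ k.castSucc → σ k.succ → ℝ)
      (L : ∀ m : Fin (d + 1), σ m → ℝ),
      (∀ p, L 0 p = 1) →
      (∀ (k : Fin d) (q : σ k.succ), L k.succ q = ∑ p, L k.castSucc p * C k p q) →
      ∀ w : σ (Fin.last d) → ℝ,
      pathSumW σ C w = ∑ q, L (Fin.last d) q * w q := by
  induction d with
  | zero =>
    intro σ inst C L h0 hstep w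
    rw [pathSumW, ← (Fin.snocEquiv σ).sum_comp]
    rw [Fintype.sum_prod_type]
    simp only [Fin.snoc_last, Finset.univ_unique, Finset.prod_empty, one_mul,
      Fin.snocEquiv_apply, Finset.sum_const, smul_eq_mul]
    simp
    refine (Finset.sum_congr rfl fun q _ => ?_).symm
    rw [show L 0 q = 1 from h0 q, one_mul]
  | succ d ih =>
    intro σ inst C L h0 hstep w
    rw [pathSumW, ← (Fin.snocEquiv σ).sum_comp]
    rw [Fintype.sum_prod_type]
    have key : ∀ q : σ (Fin.last (d + 1)),
        (∑ β : (∀ i : Fin (d + 1), σ i.castSucc),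
          (∏ k : Fin (d + 1), C k ((Fin.snocEquiv σ (q, β)) k.castSucc)
            ((Fin.snocEquiv σ (q, β)) k.succ)) * w ((Fin.snocEquiv σ (q, β)) (Fin.last (d + 1))))
        = L (Fin.last (d + 1)) q * w q := by
      intro q
      have hs : ∀ β : (∀ i : Fin (d + 1), σ i.castSucc),
          (∏ k : Fin (d + 1), C k ((Fin.snocEquiv σ (q, β)) k.castSucc)
            ((Fin.snocEquiv σ (q, β)) k.succ))
          = (∏ k : Fin d, C k.castSucc (β k.castSucc) (β k.succ))
              * C (Fin.last d) (β (Fin.last d)) q := by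
        intro β
        rw [Fin.prod_univ_castSucc]
        congr 1
        · refine Finset.prod_congr rfl fun k _ => ?_
          congr 1
          · show Fin.snoc β q (Fin.castSucc (k.castSucc)) = _
            rw [Fin.snoc_castSucc]
          · exact Fin.snoc_castSucc (p := β) (x := q) (i := k.succ)
        · congr 1
          · show Fin.snoc β q (Fin.castSucc (Fin.last d)) = _
            rw [Fin.snoc_castSucc]
          · exact Fin.snoc_last (p := β) (x := q)
      have hw : ∀ β : (∀ i : Fin (d + 1), σ i.castSucc),
          (Fin.snocEquiv σ (q, β)) (Fin.last (d + 1)) = q := fun β => Fin.snoc_last _ _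
      calc (∑ β : (∀ i : Fin (d + 1), σ i.castSucc), _)
          = ∑ β : (∀ i : Fin (d + 1), σ i.castSucc),
              (∏ k : Fin d, C k.castSucc (β k.castSucc) (β k.succ))
                * (C (Fin.last d) (β (Fin.last d)) q * w q) := by
            refine Finset.sum_congr rfl fun β _ => ?_
            rw [hs β, hw β, mul_assoc]
        _ = pathSumW (fun i => σ i.castSucc) (fun k => C k.castSucc)
              (fun p => C (Fin.last d) p q * w q) := rfl
        _ = ∑ p, L (Fin.last d).castSucc p * (C (Fin.last d) p q * w q) := by
            exact ih (fun i => σ i.castSucc) (fun i => inst i.castSucc)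
              (fun k => C k.castSucc) (fun m => L m.castSucc) h0
              (fun k q' => hstep k.castSucc q') _
        _ = L (Fin.last (d + 1)) q * w q := by
            rw [show L (Fin.last (d + 1)) q = L ((Fin.last d).succ) q from rfl,
              hstep (Fin.last d) q, Finset.sum_mul]
            exact Finset.sum_congr rfl fun p _ => by ring
    exact Finset.sum_congr rfl fun q _ => key q

/-- Pairing equivalence for two parallel index paths. -/
def pairPiEquiv {d : ℕ} (τ : Fin (d + 1) → Type) :
    ((∀ k, τ k) × (∀ k, τ k)) ≃ (∀ k, τ k × τ k) where
  toFun ab k := (ab.1 k, ab.2 k)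
  invFun γ := (fun k => (γ k).1, fun k => (γ k).2)
  left_inv _ := rfl
  right_inv _ := rfl

lemma sum_ttEntry_mul {d n : ℕ} (r : Fin (d + 1) → ℕ)
    (A B : ∀ k : Fin d, Fin n → Matrix (Fin (r k.castSucc)) (Fin (r k.succ)) ℝ) :
    ∑ i : Fin d → Fin n, ttEntry r A i * ttEntry r B i
      = pathSumW (fun k => Fin (r k) × Fin (r k))
          (fun k p q => ∑ x : Fin n, A k x p.1 q.1 * B k x p.2 q.2) (fun _ => 1) := by
  rw [pathSumW, ← ((pairPiEquiv (fun k => Fin (r k)))).sum_comp, Fintype.sum_prod_type]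
  simp only [mul_one, pairPiEquiv, Equiv.coe_fn_mk, ttEntry, Finset.sum_mul_sum]
  rw [Finset.sum_comm]
  refine Finset.sum_congr rfl fun α _ => ?_
  rw [Finset.sum_comm]
  refine Finset.sum_congr rfl fun β _ => ?_
  have key := Finset.prod_univ_sum (fun _ : Fin d => (Finset.univ : Finset (Fin n)))
    (fun k x => A k x (α k.castSucc) (α k.succ) * B k x (β k.castSucc) (β k.succ))
  rw [Fintype.piFinset_univ] at key
  rw [key]
  exact Finset.sum_congr rfl fun i _ => Finset.prod_mul_distrib.symm

noncomputable def pairC {d n : ℕ} (r : Fin (d + 1) → ℕ)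
    (A B : ∀ k : Fin d, Fin n → Matrix (Fin (r k.castSucc)) (Fin (r k.succ)) ℝ)
    (k : Fin d) (p : Fin (r k.castSucc) × Fin (r k.castSucc))
    (q : Fin (r k.succ) × Fin (r k.succ)) : ℝ :=
  ∑ x : Fin n, A k x p.1 q.1 * B k x p.2 q.2

lemma pathSumW_one {d : ℕ} (σ : Fin (d + 1) → Type) [inst : ∀ k, Fintype (σ k)]
    (C : ∀ k : Fin d, σ k.castSucc → σ k.succ → ℝ) :
    pathSumW σ C (fun _ => 1) = ∑ q, Lmat σ C (Fin.last d) q := by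
  rw [pathSumW_eq d σ inst C (Lmat σ C) (Lmat_zero σ C) (Lmat_succ σ C) (fun _ => 1)]
  simp

/-- Before the first perturbed site, the forward state is the identity. -/
lemma Lmat_pairC_diag {d n : ℕ} (r : Fin (d + 1) → ℕ) (hr0 : r 0 = 1)
    (A B U : ∀ k : Fin d, Fin n → Matrix (Fin (r k.castSucc)) (Fin (r k.succ)) ℝ)
    (hU : ∀ k : Fin d, (k : ℕ) + 1 < d → ∀ j j' : Fin (r k.succ),
      (∑ p : Fin (r k.castSucc), ∑ x : Fin n, U k x p j * U k x p j')
        = if j = j' then (1 : ℝ) else 0)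
    (k0 : ℕ) (hk0 : k0 < d)
    (hA : ∀ m : Fin d, (m : ℕ) < k0 → A m = U m)
    (hB : ∀ m : Fin d, (m : ℕ) < k0 → B m = U m) :
    ∀ m : Fin (d + 1), (m : ℕ) ≤ k0 →
      ∀ pq : Fin (r m) × Fin (r m),
        Lmat (fun k => Fin (r k) × Fin (r k)) (pairC r A B) m pq
          = if pq.1 = pq.2 then (1 : ℝ) else 0 := by
  intro m
  induction m using Fin.induction with
  | zero =>
    intro _ pq
    rw [Lmat_zero]
    have h1 : pq.1 = pq.2 := by
      have := pq.1.isLt; have := pq.2.isLt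
      exact Fin.ext (by omega)
    simp [h1]
  | succ j ihj =>
    intro hle pq
    have hjval : ((j.succ : Fin (d + 1)) : ℕ) = (j : ℕ) + 1 := rfl
    have hjk : (j : ℕ) < k0 := by omega
    have hd : (j : ℕ) + 1 < d := by omega
    rw [Lmat_succ]
    have hC : ∀ p, pairC r A B j p pq
        = ∑ x : Fin n, U j x p.1 pq.1 * U j x p.2 pq.2 := by
      intro p; rw [pairC, hA j hjk, hB j hjk]
    calc (∑ p, Lmat (fun k => Fin (r k) × Fin (r k)) (pairC r A B) j.castSucc p
            * pairC r A B j p pq)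
        = ∑ p : Fin (r j.castSucc) × Fin (r j.castSucc),
            (if p.1 = p.2 then (1:ℝ) else 0) * ∑ x : Fin n, U j x p.1 pq.1 * U j x p.2 pq.2 := by
          refine Finset.sum_congr rfl fun p _ => ?_
          rw [ihj (by rw [Fin.coe_castSucc]; omega) p, hC p]
      _ = ∑ p1 : Fin (r j.castSucc), ∑ x : Fin n, U j x p1 pq.1 * U j x p1 pq.2 := by
          rw [Fintype.sum_prod_type]
          refine Finset.sum_congr rfl fun p1 _ => ?_
          simp [ite_mul]
      _ = if pq.1 = pq.2 then 1 else 0 := hU j hd pq.1 pq.2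

/-- If the contraction at some site `k0` vanishes (gauge condition), the whole chain vanishes. -/
lemma pathSumW_pairC_zero {d n : ℕ} (r : Fin (d + 1) → ℕ) (hr0 : r 0 = 1)
    (A B U : ∀ k : Fin d, Fin n → Matrix (Fin (r k.castSucc)) (Fin (r k.succ)) ℝ)
    (hU : ∀ k : Fin d, (k : ℕ) + 1 < d → ∀ j j' : Fin (r k.succ),
      (∑ p : Fin (r k.castSucc), ∑ x : Fin n, U k x p j * U k x p j')
        = if j = j' then (1 : ℝ) else 0)
    (k0 : Fin d)
    (hA : ∀ m : Fin d, (m : ℕ) < (k0 : ℕ) → A m = U m)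
    (hB : ∀ m : Fin d, (m : ℕ) < (k0 : ℕ) → B m = U m)
    (hkill : ∀ q q' : Fin (r k0.succ),
      (∑ p : Fin (r k0.castSucc), ∑ x : Fin n, A k0 x p q * B k0 x p q') = 0) :
    pathSumW (fun k => Fin (r k) × Fin (r k)) (pairC r A B) (fun _ => 1) = 0 := by
  have claim : ∀ m : Fin (d + 1), (k0 : ℕ) < (m : ℕ) →
      ∀ pq : Fin (r m) × Fin (r m),
        Lmat (fun k => Fin (r k) × Fin (r k)) (pairC r A B) m pq = 0 := by
    intro m
    induction m using Fin.induction with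
    | zero => intro h; rw [Fin.val_zero] at h; omega
    | succ j ihj =>
      intro h pq
      have hjval : ((j.succ : Fin (d + 1)) : ℕ) = (j : ℕ) + 1 := rfl
      rw [Lmat_succ]
      by_cases hj : (j : ℕ) = (k0 : ℕ)
      · have hjk : j = k0 := Fin.ext hj
        subst hjk
        calc (∑ p, Lmat (fun k => Fin (r k) × Fin (r k)) (pairC r A B) j.castSucc p
                * pairC r A B j p pq)
            = ∑ p : Fin (r j.castSucc) × Fin (r j.castSucc),
                (if p.1 = p.2 then (1:ℝ) else 0) * pairC r A B j p pq := by
              refine Finset.sum_congr rfl fun p _ => ?_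
              rw [Lmat_pairC_diag r hr0 A B U hU (j : ℕ) j.isLt hA hB j.castSucc
                (by rw [Fin.coe_castSucc]) p]
          _ = ∑ p1 : Fin (r j.castSucc), pairC r A B j (p1, p1) pq := by
              rw [Fintype.sum_prod_type]
              refine Finset.sum_congr rfl fun p1 _ => ?_
              simp [ite_mul]
          _ = ∑ p1 : Fin (r j.castSucc), ∑ x : Fin n, A j x p1 pq.1 * B j x p1 pq.2 := rfl
          _ = 0 := hkill pq.1 pq.2
      · have hlt : (k0 : ℕ) < (j : ℕ) := by omega
        refine Finset.sum_eq_zero fun p _ => ?_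
        rw [ihj (by rw [Fin.coe_castSucc]; omega) p, zero_mul]
  rw [pathSumW_one]
  exact Finset.sum_eq_zero fun pq _ => claim (Fin.last d) (by simpa using k0.isLt) pq

lemma sum_rot3 {α β γ : Type*} [Fintype α] [Fintype β] [Fintype γ] (f : α → β → γ → ℝ) :
    ∑ a, ∑ b, ∑ c, f a b c = ∑ c, ∑ b, ∑ a, f a b c :=
  calc ∑ a, ∑ b, ∑ c, f a b c
      = ∑ b, ∑ a, ∑ c, f a b c := Finset.sum_comm
    _ = ∑ b, ∑ c, ∑ a, f a b c := Finset.sum_congr rfl fun _ _ => Finset.sum_comm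
    _ = ∑ c, ∑ b, ∑ a, f a b c := Finset.sum_comm

/-- Diagonal case: the chain evaluates to the Frobenius inner product of the site-`k` cores. -/
lemma pathSumW_pairC_diag_eval {d n : ℕ} (r : Fin (d + 1) → ℕ) (hr0 : r 0 = 1)
    (hrd : r (Fin.last d) = 1)
    (A B U V : ∀ k : Fin d, Fin n → Matrix (Fin (r k.castSucc)) (Fin (r k.succ)) ℝ)
    (hU : ∀ k : Fin d, (k : ℕ) + 1 < d → ∀ j j' : Fin (r k.succ),
      (∑ p : Fin (r k.castSucc), ∑ x : Fin n, U k x p j * U k x p j')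
        = if j = j' then (1 : ℝ) else 0)
    (hV : ∀ k : Fin d, 0 < (k : ℕ) → ∀ p p' : Fin (r k.castSucc),
      (∑ x : Fin n, ∑ q : Fin (r k.succ), V k x p q * V k x p' q)
        = if p = p' then (1 : ℝ) else 0)
    (k : Fin d)
    (hA : ∀ m : Fin d, (m : ℕ) < (k : ℕ) → A m = U m)
    (hB : ∀ m : Fin d, (m : ℕ) < (k : ℕ) → B m = U m)
    (hAgt : ∀ m : Fin d, (k : ℕ) < (m : ℕ) → A m = V m)
    (hBgt : ∀ m : Fin d, (k : ℕ) < (m : ℕ) → B m = V m) :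
    pathSumW (fun k => Fin (r k) × Fin (r k)) (pairC r A B) (fun _ => 1)
      = ∑ x : Fin n, ∑ p : Fin (r k.castSucc), ∑ q : Fin (r k.succ),
          A k x p q * B k x p q := by
  set L := Lmat (fun k => Fin (r k) × Fin (r k)) (pairC r A B) with hL
  set T := ∑ x : Fin n, ∑ p : Fin (r k.castSucc), ∑ q : Fin (r k.succ),
    A k x p q * B k x p q with hT
  have claim2 : ∀ m : Fin (d + 1), (k : ℕ) < (m : ℕ) →
      (∑ q : Fin (r m), L m (q, q)) = T := by
    intro m
    induction m using Fin.induction with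
    | zero => intro h; rw [Fin.val_zero] at h; omega
    | succ j ihj =>
      intro h
      have hjval : ((j.succ : Fin (d + 1)) : ℕ) = (j : ℕ) + 1 := rfl
      by_cases hj : (j : ℕ) = (k : ℕ)
      · have hjk : j = k := Fin.ext hj
        subst hjk
        calc (∑ q : Fin (r j.succ), L j.succ (q, q))
            = ∑ q : Fin (r j.succ), ∑ p : Fin (r j.castSucc) × Fin (r j.castSucc),
                (if p.1 = p.2 then (1:ℝ) else 0) * pairC r A B j p (q, q) := by
              refine Finset.sum_congr rfl fun q _ => ?_
              rw [hL, Lmat_succ]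
              refine Finset.sum_congr rfl fun p _ => ?_
              rw [Lmat_pairC_diag r hr0 A B U hU (j : ℕ) j.isLt hA hB j.castSucc
                (by rw [Fin.coe_castSucc]) p]
          _ = ∑ q : Fin (r j.succ), ∑ p1 : Fin (r j.castSucc), pairC r A B j (p1, p1) (q, q) := by
              refine Finset.sum_congr rfl fun q _ => ?_
              rw [Fintype.sum_prod_type]
              refine Finset.sum_congr rfl fun p1 _ => ?_
              simp [ite_mul]
          _ = ∑ q : Fin (r j.succ), ∑ p1 : Fin (r j.castSucc), ∑ x : Fin n,
                A j x p1 q * B j x p1 q := rfl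
          _ = T := by
              rw [hT]
              exact sum_rot3 fun q p1 x => A j x p1 q * B j x p1 q
      · have hlt : (k : ℕ) < (j : ℕ) := by omega
        calc (∑ q : Fin (r j.succ), L j.succ (q, q))
            = ∑ q : Fin (r j.succ), ∑ p : Fin (r j.castSucc) × Fin (r j.castSucc),
                L j.castSucc p * pairC r A B j p (q, q) := by
              refine Finset.sum_congr rfl fun q _ => ?_
              rw [hL, Lmat_succ]
          _ = ∑ p : Fin (r j.castSucc) × Fin (r j.castSucc),
                L j.castSucc p * ∑ q : Fin (r j.succ), pairC r A B j p (q, q) := by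
              rw [Finset.sum_comm]
              exact Finset.sum_congr rfl fun p _ => by rw [← Finset.mul_sum]
          _ = ∑ p : Fin (r j.castSucc) × Fin (r j.castSucc),
                L j.castSucc p * (if p.1 = p.2 then (1:ℝ) else 0) := by
              refine Finset.sum_congr rfl fun p _ => ?_
              congr 1
              calc (∑ q : Fin (r j.succ), pairC r A B j p (q, q))
                  = ∑ q : Fin (r j.succ), ∑ x : Fin n, V j x p.1 q * V j x p.2 q := by
                    refine Finset.sum_congr rfl fun q _ => ?_
                    rw [pairC, hAgt j hlt, hBgt j hlt]
                _ = ∑ x : Fin n, ∑ q : Fin (r j.succ), V j x p.1 q * V j x p.2 q :=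
                    Finset.sum_comm
                _ = if p.1 = p.2 then 1 else 0 := hV j (by omega) p.1 p.2
          _ = ∑ p1 : Fin (r j.castSucc), L j.castSucc (p1, p1) := by
              rw [Fintype.sum_prod_type]
              refine Finset.sum_congr rfl fun p1 _ => ?_
              simp [mul_ite]
          _ = T := ihj (by rw [Fin.coe_castSucc]; omega)
  rw [pathSumW_one]
  have huniq : ∀ a b : Fin (r (Fin.last d)), a = b := by
    intro a b
    have := a.isLt; have := b.isLt
    exact Fin.ext (by omega)
  calc (∑ pq : Fin (r (Fin.last d)) × Fin (r (Fin.last d)), L (Fin.last d) pq)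
      = ∑ a : Fin (r (Fin.last d)), ∑ b : Fin (r (Fin.last d)), L (Fin.last d) (a, b) := by
        rw [Fintype.sum_prod_type]
    _ = ∑ a : Fin (r (Fin.last d)), ∑ _b : Fin (r (Fin.last d)), L (Fin.last d) (a, a) := by
        refine Finset.sum_congr rfl fun a _ => Finset.sum_congr rfl fun b _ => ?_
        rw [huniq b a]
    _ = ∑ a : Fin (r (Fin.last d)), L (Fin.last d) (a, a) := by
        refine Finset.sum_congr rfl fun a _ => ?_
        rw [Finset.sum_const, Finset.card_univ, Fintype.card_fin]
        exact (congrArg (fun t => t • L (Fin.last d) (a, a)) hrd).trans (one_smul ℕ _)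
    _ = T := claim2 (Fin.last d) (by rw [Fin.val_last]; exact k.isLt)

/-- Under the gauge conditions `(M^L(δG_k))ᵀ M^L(U_k) = 0` for `k = 1,…,d−1`,
left-orthogonality of `U_k` (`k = 1,…,d−1`) and right-orthogonality of `V_k` (`k = 2,…,d`),
the inner product of two tangent vectors equals the sum of the Frobenius inner products of
their correction cores: `⟨v^(α), v^(β)⟩ = Σ_k ⟨δG_k^(α), δG_k^(β)⟩_F`. -/
theorem tangent_inner_eq_sum_frobenius {d n : ℕ} (r : Fin (d + 1) → ℕ)
    (hr0 : r 0 = 1) (hrd : r (Fin.last d) = 1)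
    (U V : ∀ k : Fin d, Fin n → Matrix (Fin (r k.castSucc)) (Fin (r k.succ)) ℝ)
    (δGa δGb : ∀ k : Fin d, Fin n → Matrix (Fin (r k.castSucc)) (Fin (r k.succ)) ℝ)
    -- left-orthogonality: `M^L(U_k)` has orthonormal columns for `k = 1,…,d−1`
    (hU : ∀ k : Fin d, (k : ℕ) + 1 < d → ∀ j j' : Fin (r k.succ),
      (∑ p : Fin (r k.castSucc), ∑ x : Fin n, U k x p j * U k x p j')
        = if j = j' then (1 : ℝ) else 0)
    -- right-orthogonality: `M^R(V_k)` has orthonormal rows for `k = 2,…,d`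
    (hV : ∀ k : Fin d, 0 < (k : ℕ) → ∀ p p' : Fin (r k.castSucc),
      (∑ x : Fin n, ∑ q : Fin (r k.succ), V k x p q * V k x p' q)
        = if p = p' then (1 : ℝ) else 0)
    -- gauge conditions for both families of correction cores, `k = 1,…,d−1`
    (hGa : ∀ k : Fin d, (k : ℕ) + 1 < d → ∀ j j' : Fin (r k.succ),
      (∑ p : Fin (r k.castSucc), ∑ x : Fin n, δGa k x p j * U k x p j') = 0)
    (hGb : ∀ k : Fin d, (k : ℕ) + 1 < d → ∀ j j' : Fin (r k.succ),
      (∑ p : Fin (r k.castSucc), ∑ x : Fin n, δGb k x p j * U k x p j') = 0) :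
    (∑ i : Fin d → Fin n, tangentVec r U V δGa i * tangentVec r U V δGb i)
      = ∑ k : Fin d, ∑ x : Fin n, ∑ p : Fin (r k.castSucc), ∑ q : Fin (r k.succ),
          δGa k x p q * δGb k x p q := by
  classical
  set A : Fin d → ∀ m : Fin d, Fin n → Matrix (Fin (r m.castSucc)) (Fin (r m.succ)) ℝ :=
    fun k => fun m x => if m < k then U m x else if m = k then δGa m x else V m x with hAdef
  set B : Fin d → ∀ m : Fin d, Fin n → Matrix (Fin (r m.castSucc)) (Fin (r m.succ)) ℝ :=
    fun k => fun m x => if m < k then U m x else if m = k then δGb m x else V m x with hBdef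
  have hAU : ∀ k m : Fin d, (m : ℕ) < (k : ℕ) → A k m = U m := by
    intro k m hm; funext x
    simp only [hAdef]; rw [if_pos (Fin.lt_def.mpr hm)]
  have hBU : ∀ k m : Fin d, (m : ℕ) < (k : ℕ) → B k m = U m := by
    intro k m hm; funext x
    simp only [hBdef]; rw [if_pos (Fin.lt_def.mpr hm)]
  have hAk : ∀ k : Fin d, A k k = δGa k := by
    intro k; funext x
    simp [hAdef, lt_irrefl]
  have hBk : ∀ k : Fin d, B k k = δGb k := by
    intro k; funext x
    simp [hBdef, lt_irrefl]
  have hAV : ∀ k m : Fin d, (k : ℕ) < (m : ℕ) → A k m = V m := by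
    intro k m hm; funext x
    simp only [hAdef]
    rw [if_neg (by rw [Fin.lt_def]; omega), if_neg (by intro h; subst h; omega)]
  have hBV : ∀ k m : Fin d, (k : ℕ) < (m : ℕ) → B k m = V m := by
    intro k m hm; funext x
    simp only [hBdef]
    rw [if_neg (by rw [Fin.lt_def]; omega), if_neg (by intro h; subst h; omega)]
  have hpair : ∀ k l : Fin d,
      (∑ i : Fin d → Fin n, ttEntry r (A k) i * ttEntry r (B l) i)
        = if k = l then (∑ x : Fin n, ∑ p : Fin (r k.castSucc), ∑ q : Fin (r k.succ),
            δGa k x p q * δGb k x p q) else 0 := by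
    intro k l
    rw [sum_ttEntry_mul r (A k) (B l)]
    rcases lt_trichotomy (k : ℕ) (l : ℕ) with hlt | heq | hgt
    · rw [if_neg (by intro h; subst h; omega)]
      refine pathSumW_pairC_zero r hr0 (A k) (B l) U hU k
        (fun m hm => hAU k m hm) (fun m hm => hBU l m (by omega)) ?_
      intro q q'
      have hd : (k : ℕ) + 1 < d := by have := l.isLt; omega
      rw [hAk k, hBU l k hlt]
      exact hGa k hd q q'
    · have : k = l := Fin.ext heq
      subst this
      rw [if_pos rfl]
      have hd := pathSumW_pairC_diag_eval r hr0 hrd (A k) (B k) U V hU hV k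
        (fun m hm => hAU k m hm) (fun m hm => hBU k m hm)
        (fun m hm => hAV k m hm) (fun m hm => hBV k m hm)
      rw [hAk k, hBk k] at hd
      exact hd
    · rw [if_neg (by intro h; subst h; omega)]
      refine pathSumW_pairC_zero r hr0 (A k) (B l) U hU l
        (fun m hm => hAU k m (by omega)) (fun m hm => hBU l m hm) ?_
      intro q q'
      have hd : (l : ℕ) + 1 < d := by have := k.isLt; omega
      rw [hBk l, hAU k l hgt]
      calc (∑ p : Fin (r l.castSucc), ∑ x : Fin n, U l x p q * δGb l x p q')
          = ∑ p : Fin (r l.castSucc), ∑ x : Fin n, δGb l x p q' * U l x p q := by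
            exact Finset.sum_congr rfl fun p _ => Finset.sum_congr rfl fun x _ => mul_comm _ _
        _ = 0 := hGb l hd q' q
  calc (∑ i : Fin d → Fin n, tangentVec r U V δGa i * tangentVec r U V δGb i)
      = ∑ i : Fin d → Fin n, ∑ k : Fin d, ∑ l : Fin d,
          ttEntry r (A k) i * ttEntry r (B l) i := by
        refine Finset.sum_congr rfl fun i _ => ?_
        rw [tangentVec, tangentVec, Finset.sum_mul_sum]
    _ = ∑ k : Fin d, ∑ l : Fin d, ∑ i : Fin d → Fin n,
          ttEntry r (A k) i * ttEntry r (B l) i := by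
        rw [Finset.sum_comm]
        exact Finset.sum_congr rfl fun k _ => Finset.sum_comm
    _ = ∑ k : Fin d, ∑ l : Fin d, (if k = l then (∑ x : Fin n, ∑ p : Fin (r k.castSucc),
          ∑ q : Fin (r k.succ), δGa k x p q * δGb k x p q) else 0) := by
        exact Finset.sum_congr rfl fun k _ => Finset.sum_congr rfl fun l _ => hpair k l
    _ = ∑ k : Fin d, ∑ x : Fin n, ∑ p : Fin (r k.castSucc), ∑ q : Fin (r k.succ),
          δGa k x p q * δGb k x p q := by
        refine Finset.sum_congr rfl fun k _ => ?_
        rw [Finset.sum_ite_eq]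
        simp
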